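/- (Lemme 2, general norm criterion over ℚ_p for p ≡ 1 mod 4) Let p be a prime with p ≡ 1 (mod 4), let z ∈ ℚ_p be nonzero with normalized valuation n = v(z), and let u ∈ ℤ_p be the unit with z = pⁿ·u. Then there exist x, y ∈ ℚ_p with x² − p·y² = z if and only if the residue of u in ZMod p (via the reduction map ℤ_p → ZMod p) is a square in ZMod p. -/

import Mathlib

open PadicInt

section Aux

variable {p : ℕ} [hp : Fact p.Prime]

lemma toZMod_eq_zero_iff' (x : ℤ_[p]) : PadicInt.toZMod x = 0 ↔ ¬ IsUnit x := by
  rw [← RingHom.mem_ker, PadicInt.ker_toZMod, IsLocalRing.mem_maximalIdeal, mem_nonunits_iff]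

lemma isUnit_of_toZMod_ne_zero {x : ℤ_[p]} (h : PadicInt.toZMod x ≠ 0) : IsUnit x := by
  by_contra hc
  exact h ((toZMod_eq_zero_iff' x).mpr hc)

lemma isSquare_of_isSquare_toZMod (hodd : p ≠ 2) {u : ℤ_[p]} (hu : IsUnit u)
    (h : IsSquare (PadicInt.toZMod u)) : IsSquare u := by
  obtain ⟨b, hb⟩ := h
  have hu0 : PadicInt.toZMod u ≠ 0 := by
    simp [toZMod_eq_zero_iff', hu]
  have hb0 : b ≠ 0 := by
    rintro rfl; exact hu0 (by simp [hb])
  set a : ℤ_[p] := ((b.val : ℕ) : ℤ_[p]) with ha_def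
  have ha : PadicInt.toZMod a = b := by
    rw [ha_def, map_natCast, ZMod.natCast_val, ZMod.cast_id]
  set F : Polynomial ℤ_[p] := Polynomial.X ^ 2 - Polynomial.C u with hF
  have heval : F.eval a = a ^ 2 - u := by simp [hF]
  have hderiv : F.derivative.eval a = 2 * a := by
    simp [hF]
    exact Or.inl one_add_one_eq_two
  have h2ne : (2 : ZMod p) ≠ 0 := by
    intro h2
    have hd : (p : ℕ) ∣ 2 := by
      rw [← ZMod.natCast_eq_zero_iff]
      exact_mod_cast h2
    exact hodd ((Nat.prime_dvd_prime_iff_eq hp.out Nat.prime_two).mp hd)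
  have hunit2a : IsUnit (2 * a) := by
    apply isUnit_of_toZMod_ne_zero
    rw [map_mul, ha]
    simp only [map_ofNat]
    exact mul_ne_zero h2ne hb0
  have hderivnorm : ‖F.derivative.eval a‖ = 1 := by
    rw [hderiv]; exact PadicInt.isUnit_iff.mp hunit2a
  have hevalzero : PadicInt.toZMod (a ^ 2 - u) = 0 := by
    rw [map_sub, map_pow, ha, hb]; ring
  have hevalnorm : ‖F.eval a‖ < 1 := by
    rw [heval, ← PadicInt.not_isUnit_iff]
    rw [toZMod_eq_zero_iff'] at hevalzero
    exact hevalzero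
  have hnorm : ‖F.eval a‖ < ‖F.derivative.eval a‖ ^ 2 := by
    rw [hderivnorm]; simpa using hevalnorm
  obtain ⟨z, hz, -⟩ := hensels_lemma hnorm
  simp only [hF, Polynomial.coe_aeval_eq_eval, Polynomial.eval_sub, Polynomial.eval_pow, Polynomial.eval_X,
    Polynomial.eval_C, sub_eq_zero] at hz
  exact ⟨z, by rw [← hz]; ring⟩

lemma S_mul' {a b : ℚ_[p]} (ha : ∃ x y : ℚ_[p], x ^ 2 - p * y ^ 2 = a)
    (hb : ∃ x y : ℚ_[p], x ^ 2 - p * y ^ 2 = b) :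
    ∃ x y : ℚ_[p], x ^ 2 - p * y ^ 2 = a * b := by
  obtain ⟨x1, y1, rfl⟩ := ha
  obtain ⟨x2, y2, rfl⟩ := hb
  exact ⟨x1 * x2 + p * y1 * y2, x1 * y2 + y1 * x2, by ring⟩

lemma S_inv' {a : ℚ_[p]} (ha0 : a ≠ 0) (ha : ∃ x y : ℚ_[p], x ^ 2 - p * y ^ 2 = a) :
    ∃ x y : ℚ_[p], x ^ 2 - p * y ^ 2 = a⁻¹ := by
  obtain ⟨x, y, rfl⟩ := ha
  refine ⟨x / (x ^ 2 - p * y ^ 2), y / (x ^ 2 - p * y ^ 2), ?_⟩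
  field_simp

lemma S_p' (h4 : p % 4 = 1) : ∃ x y : ℚ_[p], x ^ 2 - p * y ^ 2 = (p : ℚ_[p]) := by
  have hodd : p ≠ 2 := by omega
  have hsq : IsSquare (-1 : ZMod p) := ZMod.exists_sq_eq_neg_one_iff.mpr (by omega)
  have hsqZ : IsSquare (-1 : ℤ_[p]) := by
    apply isSquare_of_isSquare_toZMod hodd isUnit_one.neg
    simpa using hsq
  obtain ⟨s, hs⟩ := hsqZ
  refine ⟨0, (s : ℚ_[p]), ?_⟩
  have h2 : ((s : ℚ_[p])) ^ 2 = -1 := by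
    rw [sq, ← PadicInt.coe_mul, ← hs]
    simp
  rw [h2]
  ring

lemma S_zpow' (h4 : p % 4 = 1) (n : ℤ) :
    ∃ x y : ℚ_[p], x ^ 2 - p * y ^ 2 = (p : ℚ_[p]) ^ n := by
  have hp0 : (p : ℚ_[p]) ≠ 0 := Nat.cast_ne_zero.mpr hp.out.pos.ne'
  induction n using Int.induction_on with
  | zero => exact ⟨1, 0, by simp⟩
  | succ k ih => rw [zpow_add_one₀ hp0]; exact S_mul' ih (S_p' h4)
  | pred k ih => rw [zpow_sub_one₀ hp0]; exact S_mul' ih (S_inv' hp0 (S_p' h4))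

lemma toZMod_isSquare_of_S {u : ℤ_[p]} (hu : IsUnit u)
    (h : ∃ x y : ℚ_[p], x ^ 2 - p * y ^ 2 = (u : ℚ_[p])) :
    IsSquare (PadicInt.toZMod u) := by
  obtain ⟨x, y, hxy⟩ := h
  have hun : ‖(u : ℚ_[p])‖ = 1 := by
    rw [← PadicInt.norm_def]; exact PadicInt.isUnit_iff.mp hu
  have hu0 : (u : ℚ_[p]) ≠ 0 := by
    intro h0; rw [h0] at hun; simp at hun
  have hp1 : (1 : ℝ) < p := by exact_mod_cast hp.out.one_lt
  have hppos : (0 : ℝ) < p := lt_trans one_pos hp1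
  by_cases hy : y = 0
  · subst hy
    have hx2 : x ^ 2 = u := by
      rw [← hxy]; ring
    have hxnorm : ‖x‖ = 1 := by
      have h1 : ‖x‖ ^ 2 = 1 := by rw [← _root_.norm_pow, hx2, hun]
      have h2 : (‖x‖ - 1) * (‖x‖ + 1) = 0 := by nlinarith
      rcases mul_eq_zero.mp h2 with h3 | h3
      · linarith
      · linarith [norm_nonneg x]
    set x' : ℤ_[p] := ⟨x, le_of_eq hxnorm⟩ with hx'
    have hux : u = x' ^ 2 := by
      apply Subtype.coe_injective
      push_cast
      exact hx2.symm
    exact ⟨PadicInt.toZMod x', by rw [hux, map_pow]; ring⟩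
  · -- y ≠ 0
    have hBy : ‖(p : ℚ_[p]) * y ^ 2‖ = (p : ℝ) ^ (-(1 + 2 * y.valuation)) := by
      rw [_root_.norm_mul, _root_.norm_pow, Padic.norm_p, Padic.norm_eq_zpow_neg_valuation hy,
        ← zpow_neg_one (p : ℝ), ← zpow_natCast ((p : ℝ) ^ (-y.valuation)) 2, ← zpow_mul,
        ← zpow_add₀ (ne_of_gt hppos)]
      congr 1
      push_cast
      ring
    have hByne1 : ‖(p : ℚ_[p]) * y ^ 2‖ ≠ 1 := by
      rw [hBy]
      intro hcon
      rw [show (1 : ℝ) = (p : ℝ) ^ (0 : ℤ) from (zpow_zero _).symm] at hcon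
      have := (zpow_right_strictMono₀ hp1).injective hcon
      omega
    have hx0 : x ≠ 0 := by
      intro h0
      subst h0
      have : ‖(p : ℚ_[p]) * y ^ 2‖ = 1 := by
        have hneg : (p : ℚ_[p]) * y ^ 2 = -(u : ℚ_[p]) := by rw [← hxy]; ring
        rw [hneg, norm_neg, hun]
      exact hByne1 this
    have hAx : ‖x ^ 2‖ = (p : ℝ) ^ (-(2 * x.valuation)) := by
      rw [_root_.norm_pow, Padic.norm_eq_zpow_neg_valuation hx0,
        ← zpow_natCast ((p : ℝ) ^ (-x.valuation)) 2, ← zpow_mul]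
      congr 1
      push_cast
      ring
    have hne : ‖x ^ 2‖ ≠ ‖(p : ℚ_[p]) * y ^ 2‖ := by
      rw [hAx, hBy]
      intro hcon
      have := (zpow_right_strictMono₀ hp1).injective hcon
      omega
    have hmax : max ‖x ^ 2‖ ‖(p : ℚ_[p]) * y ^ 2‖ = 1 := by
      have hne' : ‖x ^ 2‖ ≠ ‖-((p : ℚ_[p]) * y ^ 2)‖ := by rwa [norm_neg]
      have h1 := Padic.add_eq_max_of_ne hne'
      rw [← sub_eq_add_neg, hxy, hun, norm_neg] at h1
      exact h1.symm
    have hA1 : ‖x ^ 2‖ = 1 := by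
      rcases max_choice ‖x ^ 2‖ ‖(p : ℚ_[p]) * y ^ 2‖ with h1 | h1
      · rw [h1] at hmax; exact hmax
      · rw [h1] at hmax; exact absurd hmax hByne1
    have hBle : ‖(p : ℚ_[p]) * y ^ 2‖ ≤ 1 := by
      rw [← hmax]; exact le_max_right _ _
    -- deduce valuations
    have hvx : x.valuation = 0 := by
      rw [hAx, show (1 : ℝ) = (p : ℝ) ^ (0 : ℤ) from (zpow_zero _).symm] at hA1
      have := (zpow_right_strictMono₀ hp1).injective hA1
      omega
    have hxle : ‖x‖ ≤ 1 := by
      rw [Padic.norm_eq_zpow_neg_valuation hx0, hvx]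
      simp
    have hvy : 0 ≤ y.valuation := by
      rw [hBy, show (1 : ℝ) = (p : ℝ) ^ (0 : ℤ) from (zpow_zero _).symm] at hBle
      have := ((zpow_right_strictMono₀ hp1).le_iff_le).mp hBle
      omega
    have hyle : ‖y‖ ≤ 1 := by
      rw [Padic.norm_eq_zpow_neg_valuation hy, show (1 : ℝ) = (p : ℝ) ^ (0 : ℤ) from (zpow_zero _).symm]
      exact ((zpow_right_strictMono₀ hp1).le_iff_le).mpr (by omega)
    set x' : ℤ_[p] := ⟨x, hxle⟩ with hx'
    set y' : ℤ_[p] := ⟨y, hyle⟩ with hy'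
    have hu' : u = x' ^ 2 - p * y' ^ 2 := by
      apply Subtype.coe_injective
      push_cast
      exact hxy.symm
    refine ⟨PadicInt.toZMod x', ?_⟩
    rw [hu', map_sub, map_mul, map_pow, map_pow, map_natCast, ZMod.natCast_self]
    ring

end Aux

/-- (Lemme 2, general norm criterion over `ℚ_p` for `p ≡ 1 (mod 4)`) Write a nonzero
`z ∈ ℚ_p` as `z = p^{v(z)}·u` with `u` a unit of `ℤ_p`. Then `z` is of the form
`x² − p·y²` if and only if the residue of `u` in `ZMod p` is a square. -/
theorem norm_criterion_Qp_one_mod_four (p : ℕ) [Fact p.Prime] (hp : p % 4 = 1)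
    (z : ℚ_[p]) (hz : z ≠ 0) (u : ℤ_[p]) (hu : IsUnit u)
    (hzu : z = (p : ℚ_[p]) ^ z.valuation * u) :
    (∃ x y : ℚ_[p], x ^ 2 - p * y ^ 2 = z) ↔ IsSquare (PadicInt.toZMod u) := by
  have hfact : Fact p.Prime := inferInstance
  have hp0 : (p : ℚ_[p]) ≠ 0 := Nat.cast_ne_zero.mpr hfact.out.pos.ne'
  have hpn0 : (p : ℚ_[p]) ^ z.valuation ≠ 0 := zpow_ne_zero _ hp0
  have hcu : (u : ℚ_[p]) = (p : ℚ_[p]) ^ (-z.valuation) * z := by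
    rw [zpow_neg, eq_comm, inv_mul_eq_iff_eq_mul₀ hpn0]
    exact hzu
  constructor
  · intro h
    apply toZMod_isSquare_of_S hu
    rw [hcu]
    exact S_mul' (S_zpow' hp (-z.valuation)) h
  · intro h
    obtain ⟨s, hs⟩ := isSquare_of_isSquare_toZMod (by omega) hu h
    have hSu : ∃ x y : ℚ_[p], x ^ 2 - p * y ^ 2 = (u : ℚ_[p]) :=
      ⟨(s : ℚ_[p]), 0, by rw [hs]; push_cast; ring⟩
    rw [hzu]
    exact S_mul' (S_zpow' hp z.valuation) hSu
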